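/- Let V be a finite type and E : V → V → Prop a relation with no directed cycles (¬ Relation.TransGen E v v for every v) that is transitive (E x y and E y z imply E x z). Then E is reduced if and only if E is strongly reduced. -/

import Mathlib

/-- A directed path of length `k` in `(V, E)`: a map `p : Fin (k+1) → V` with
`E (p i) (p (i+1))` for all `i < k`. -/
def IsDirPath {V : Type*} (E : V → V → Prop) (k : ℕ) (p : Fin (k + 1) → V) : Prop :=
  ∀ i : Fin k, E (p i.castSucc) (p i.succ)

/-- A directed path of length `k` from `v` to `w`. -/
def IsDirPathFromTo {V : Type*} (E : V → V → Prop) (k : ℕ) (p : Fin (k + 1) → V)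
    (v w : V) : Prop :=
  p 0 = v ∧ p (Fin.last k) = w ∧ IsDirPath E k p

/-- `E` is reduced: for every pair of vertices `v, w` with `w` reachable from `v`, there is
a directed path from `v` to `w` whose vertex set contains the vertex set of every directed
path from `v` to `w`. -/
def Reduced {V : Type*} (E : V → V → Prop) : Prop :=
  ∀ v w : V, Relation.TransGen E v w →
    ∃ (m : ℕ) (γM : Fin (m + 1) → V), IsDirPathFromTo E m γM v w ∧
      ∀ (k : ℕ) (γ : Fin (k + 1) → V), IsDirPathFromTo E k γ v w →
        Set.range γ ⊆ Set.range γM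

/-- A topological order of `(V, E)`: an injective map `f : V → ℕ` with `f u < f v`
whenever `E u v`. -/
def IsTopologicalOrder {V : Type*} (E : V → V → Prop) (f : V → ℕ) : Prop :=
  Function.Injective f ∧ ∀ u v : V, E u v → f u < f v

/-- `L` is the list of the elements of `S`, sorted in strictly increasing order of `f`. -/
def IsSortedListOf {V : Type*} (f : V → ℕ) (S : Set V) (L : List V) : Prop :=
  (∀ x : V, x ∈ L ↔ x ∈ S) ∧ L.Pairwise fun x y => f x < f y

/-- The list `L` is a directed path from `v` to `w`: its first element is `v`, its last
element is `w`, and consecutive elements are related by `E`. -/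
def IsDirPathList {V : Type*} (E : V → V → Prop) (v w : V) (L : List V) : Prop :=
  L.head? = some v ∧ L.getLast? = some w ∧ L.Chain' E

/-- `E` is strongly reduced: for every topological order `f`, every pair of vertices `v, w`
and every two directed paths `γ, γ'` from `v` to `w`, the list of vertices of the union of
the vertex sets of `γ` and `γ'`, sorted in strictly increasing order of `f`, is a directed
path from `v` to `w`. -/
def StronglyReduced {V : Type*} (E : V → V → Prop) : Prop :=
  ∀ f : V → ℕ, IsTopologicalOrder E f →
    ∀ (v w : V) (k k' : ℕ) (γ : Fin (k + 1) → V) (γ' : Fin (k' + 1) → V),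
      IsDirPathFromTo E k γ v w → IsDirPathFromTo E k' γ' v w →
        ∀ L : List V, IsSortedListOf f (Set.range γ ∪ Set.range γ') L →
          IsDirPathList E v w L

-- chain along a path
lemma path_rel {V : Type*} {E : V → V → Prop} (htrans : ∀ x y z : V, E x y → E y z → E x z)
    {k : ℕ} {p : Fin (k+1) → V} (hp : IsDirPath E k p) :
    ∀ j : ℕ, ∀ hj : j < k + 1, ∀ i : ℕ, ∀ hi : i < j, E (p ⟨i, by omega⟩) (p ⟨j, hj⟩) := by
  intro j
  induction j with
  | zero => omega
  | succ j ih =>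
    intro hj i hi
    have hstep : E (p ⟨j, by omega⟩) (p ⟨j+1, hj⟩) := by
      have := hp ⟨j, by omega⟩
      simpa [Fin.castSucc, Fin.succ, Fin.castAdd, Fin.castLE] using this
    rcases Nat.lt_or_ge i j with h | h
    · exact htrans _ _ _ (ih (by omega) i h) hstep
    · have : i = j := by omega
      subst this; exact hstep

-- existence of topological order
lemma exists_topo {V : Type*} [Fintype V] (E : V → V → Prop)
    (hacyc : ∀ v : V, ¬Relation.TransGen E v v)
    (htrans : ∀ x y z : V, E x y → E y z → E x z) :
    ∃ f : V → ℕ, IsTopologicalOrder E f := by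
  classical
  have hirr : ∀ v : V, ¬ E v v := fun v h => hacyc v (Relation.TransGen.single h)
  set r : V → V → Prop := fun a b => a = b ∨ E a b with hr
  haveI : IsPartialOrder V r := by
    refine { refl := fun a => Or.inl rfl, trans := ?_, antisymm := ?_ }
    · intro a b c hab hbc
      rcases hab with rfl | hab
      · exact hbc
      · rcases hbc with rfl | hbc
        · exact Or.inr hab
        · exact Or.inr (htrans _ _ _ hab hbc)
    · intro a b hab hba
      rcases hab with rfl | hab
      · rfl
      · rcases hba with rfl | hba
        · rfl
        · exact absurd (htrans _ _ _ hab hba) (hirr a)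
  obtain ⟨s, hs, hrs⟩ := extend_partialOrder r
  haveI := hs
  set f : V → ℕ := fun x => (Finset.univ.filter (fun u => s u x ∧ u ≠ x)).card with hf
  have hmono : ∀ a b : V, s a b → a ≠ b → f a < f b := by
    intro a b hab hne
    apply Finset.card_lt_card
    constructor
    · intro u hu
      simp only [Finset.mem_filter, Finset.mem_univ, true_and] at hu ⊢
      refine ⟨hs.trans _ _ _ hu.1 hab, ?_⟩
      rintro rfl
      exact hne (hs.antisymm _ _ hab hu.1)
    · intro hsub
      have ha : a ∈ Finset.univ.filter (fun u => s u b ∧ u ≠ b) := by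
        simp [hab, hne]
      exact (Finset.mem_filter.1 (hsub ha)).2.2 rfl
  refine ⟨f, ?_, ?_⟩
  · intro a b hab
    by_contra hne
    rcases hs.total a b with h | h
    · exact absurd hab (Nat.ne_of_lt (hmono a b h hne))
    · exact absurd hab.symm (Nat.ne_of_lt (hmono b a h (Ne.symm hne)))
  · intro u v huv
    exact hmono u v (hrs u v (Or.inr huv)) (fun h => hirr u (h ▸ huv))

-- existence of sorted lists
lemma exists_sorted {V : Type*} [Fintype V] {f : V → ℕ} (hf : Function.Injective f)
    (S : Set V) : ∃ L : List V, IsSortedListOf f S L := by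
  classical
  set R : V → V → Prop := fun x y => f x ≤ f y with hR
  haveI : IsTrans V R := ⟨fun a b c h1 h2 => le_trans h1 h2⟩
  haveI : IsAntisymm V R := ⟨fun a b h1 h2 => hf (le_antisymm h1 h2)⟩
  haveI : IsTotal V R := ⟨fun a b => le_total _ _⟩
  haveI : DecidableRel R := fun a b => Nat.decLe _ _
  set T : Finset V := Finset.univ.filter (· ∈ S) with hT
  refine ⟨T.sort R, ?_, ?_⟩
  · intro x
    simp [Finset.mem_sort, hT]
  · have h1 := T.pairwise_sort R
    have h2 := T.sort_nodup R
    rw [List.Nodup] at h2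
    have := h1.and h2
    exact this.imp (fun {a b} h => lt_of_le_of_ne h.1 (fun he => h.2 (hf he)))

-- head of sorted list
lemma head_sorted {V : Type*} {f : V → ℕ} {S : Set V} {L : List V}
    (hL : IsSortedListOf f S L) {v : V} (hv : v ∈ S)
    (hmin : ∀ x ∈ S, x ≠ v → f v < f x) : L.head? = some v := by
  obtain ⟨hmem, hpw⟩ := hL
  cases L with
  | nil => exact absurd ((hmem v).2 hv) (List.not_mem_nil)
  | cons a t =>
    have hva : v = a := by
      by_contra hne
      have hvt : v ∈ t := by
        have := (hmem v).2 hv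
        rcases List.mem_cons.1 this with h | h
        · exact absurd h hne
        · exact h
      have h1 : f a < f v := (List.pairwise_cons.1 hpw).1 v hvt
      have h2 : f v < f a := hmin a ((hmem a).1 (List.mem_cons_self)) (fun h => hne h.symm)
      omega
    simp [hva]

lemma last_sorted {V : Type*} {f : V → ℕ} {S : Set V} {L : List V}
    (hL : IsSortedListOf f S L) {w : V} (hw : w ∈ S)
    (hmax : ∀ x ∈ S, x ≠ w → f x < f w) : L.getLast? = some w := by
  obtain ⟨hmem, hpw⟩ := hL
  have hwL : w ∈ L := (hmem w).2 hw
  have hne : L ≠ [] := List.ne_nil_of_mem hwL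
  rw [List.getLast?_eq_getLast_of_ne_nil hne]
  congr 1
  set u := L.getLast hne with hu
  by_contra hne'
  have huL : u ∈ L := List.getLast_mem hne
  have huS : u ∈ S := (hmem u).1 huL
  have h1 : f u < f w := hmax u huS hne'
  -- w appears in L; u is the last; pairwise gives f w < f u unless w = u
  have hlen : 0 < L.length := List.length_pos_iff.2 hne
  obtain ⟨⟨i, hi⟩, hget⟩ := List.mem_iff_get.1 hwL
  have hulen : u = L.get ⟨L.length - 1, by omega⟩ := by
    rw [hu, List.getLast_eq_getElem]
    simp [List.get_eq_getElem]
  have hil : i < L.length - 1 := by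
    rcases Nat.lt_or_ge i (L.length - 1) with h | h
    · exact h
    · exfalso
      have hieq : i = L.length - 1 := by omega
      apply hne'
      rw [hulen, ← hget]
      simp only [List.get_eq_getElem]
      congr 1
      omega
  have := List.pairwise_iff_get.1 hpw ⟨i, hi⟩ ⟨L.length - 1, by omega⟩ (by simpa using hil)
  rw [hget, ← hulen] at this
  omega

lemma chain'_sorted {V : Type*} {E : V → V → Prop} {f : V → ℕ} {S : Set V} {L : List V}
    (hL : IsSortedListOf f S L)
    (hcons : ∀ x y : V, x ∈ S → y ∈ S → f x < f y →
      (∀ z ∈ S, ¬(f x < f z ∧ f z < f y)) → E x y) : L.Chain' E := by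
  obtain ⟨hmem, hpw⟩ := hL
  refine List.isChain_iff_getElem.2 ?_
  intro i h
  have hmono := List.pairwise_iff_get.1 hpw
  set x := L.get ⟨i, by omega⟩ with hx
  set y := L.get ⟨i+1, by omega⟩ with hy
  apply hcons x y ((hmem x).1 (L.get_mem _)) ((hmem y).1 (L.get_mem _))
  · exact hmono ⟨i, by omega⟩ ⟨i+1, by omega⟩ (by simp)
  · rintro z hz ⟨h1, h2⟩
    obtain ⟨⟨j, hj⟩, hgetz⟩ := List.mem_iff_get.1 ((hmem z).2 hz)
    rcases Nat.lt_trichotomy j i with hj' | hj' | hj'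
    · have := hmono ⟨j, hj⟩ ⟨i, by omega⟩ (by simpa using hj')
      rw [hgetz, ← hx] at this; omega
    · subst hj'
      rw [hgetz] at hx; rw [← hx] at h1; omega
    · rcases Nat.lt_or_ge j (i+1+1) with hj'' | hj''
      · have : j = i + 1 := by omega
        subst this
        rw [hgetz] at hy; rw [← hy] at h2; omega
      · have := hmono ⟨i+1, by omega⟩ ⟨j, hj⟩ (by simpa using hj'')
        rw [hgetz, ← hy] at this; omega

lemma adj_of_no_between {V : Type*} {E : V → V → Prop} {f : V → ℕ} {L : List V}
    (hpw : L.Pairwise fun a b => f a < f b) (hch : L.Chain' E)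
    {x y : V} (hx : x ∈ L) (hy : y ∈ L) (hxy : f x < f y)
    (hno : ∀ z ∈ L, ¬(f x < f z ∧ f z < f y)) : E x y := by
  obtain ⟨⟨a, ha⟩, hga⟩ := List.mem_iff_get.1 hx
  obtain ⟨⟨b, hb⟩, hgb⟩ := List.mem_iff_get.1 hy
  have hmono := List.pairwise_iff_get.1 hpw
  have hab : a < b := by
    rcases Nat.lt_trichotomy a b with h | h | h
    · exact h
    · exfalso; subst h; rw [hga] at hgb; subst hgb; omega
    · exfalso
      have := hmono ⟨b, hb⟩ ⟨a, ha⟩ (by simpa using h)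
      rw [hga, hgb] at this; omega
  have hb1 : b = a + 1 := by
    by_contra h
    have h2 : a + 1 < b := by omega
    refine hno (L.get ⟨a+1, by omega⟩) (L.get_mem _) ⟨?_, ?_⟩
    · have := hmono ⟨a, ha⟩ ⟨a+1, by omega⟩ (by simp)
      rwa [hga] at this
    · have := hmono ⟨a+1, by omega⟩ ⟨b, hb⟩ (by simpa using h2)
      rwa [hgb] at this
  subst hb1
  have := List.isChain_iff_getElem.1 hch a (by omega)
  rwa [show L[a]'(by omega) = x from hga, show L[a+1]'(by omega) = y from hgb] at this

theorem transitive_reduced_iff_stronglyReduced {V : Type*} [Fintype V] (E : V → V → Prop)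
    (hacyc : ∀ v : V, ¬Relation.TransGen E v v)
    (htrans : ∀ x y z : V, E x y → E y z → E x z) :
    Reduced E ↔ StronglyReduced E := by
  classical
  constructor
  · intro hRed f hf v w k k' γ γ' hγ hγ' L hL
    set S : Set V := Set.range γ ∪ Set.range γ' with hSdef
    have hvS : v ∈ S := Or.inl ⟨0, hγ.1⟩
    have hwS : w ∈ S := Or.inl ⟨Fin.last k, hγ.2.1⟩
    have key : (∀ x ∈ S, x ≠ v → f v < f x) ∧ (∀ x ∈ S, x ≠ w → f x < f w) ∧
        (∀ x y : V, x ∈ S → y ∈ S → f x < f y → E x y) := by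
      by_cases hvw : v = w
      · subst hvw
        have hrange : ∀ (n : ℕ) (p : Fin (n+1) → V), IsDirPathFromTo E n p v v →
            Set.range p = {v} := by
          intro n p hp
          have hn : n = 0 := by
            by_contra h
            have hE := path_rel htrans hp.2.2 n (by omega) 0 (by omega)
            rw [show p ⟨0, by omega⟩ = v from hp.1, show p ⟨n, by omega⟩ = v from hp.2.1] at hE
            exact hacyc v (Relation.TransGen.single hE)
          subst hn
          ext x
          constructor
          · rintro ⟨i, rfl⟩
            have : i = 0 := Fin.ext (by simpa using Nat.lt_one_iff.mp i.isLt)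
            subst this
            exact hp.1
          · rintro rfl
            exact ⟨0, hp.1⟩
        have hS1 : S = {v} := by
          rw [hSdef, hrange k γ hγ, hrange k' γ' hγ', Set.union_self]
        rw [hS1]
        refine ⟨?_, ?_, ?_⟩
        · rintro x rfl hx; exact absurd rfl hx
        · rintro x rfl hx; exact absurd rfl hx
        · rintro x y rfl rfl hxy; omega
      · -- v ≠ w : use Reduced
        have hk : 0 < k := by
          rcases Nat.eq_zero_or_pos k with rfl | h
          · exact absurd (hγ.1.symm.trans hγ.2.1) hvw
          · exact h
        have hEvw : E v w := by
          have hE := path_rel htrans hγ.2.2 k (by omega) 0 hk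
          rwa [show γ ⟨0, by omega⟩ = v from hγ.1, show γ ⟨k, by omega⟩ = w from hγ.2.1] at hE
        obtain ⟨m, γM, hM, hmaxP⟩ := hRed v w (Relation.TransGen.single hEvw)
        have hsub : S ⊆ Set.range γM :=
          Set.union_subset (hmaxP k γ hγ) (hmaxP k' γ' hγ')
        have hchain : ∀ x y : V, x ∈ Set.range γM → y ∈ Set.range γM → f x < f y → E x y := by
          rintro x y ⟨i, rfl⟩ ⟨j, rfl⟩ hxy
          rcases Nat.lt_trichotomy i.val j.val with h | h | h
          · have := path_rel htrans hM.2.2 j.val j.isLt i.val h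
            exact this
          · exfalso
            have : i = j := Fin.ext h
            subst this; omega
          · exfalso
            have hE := path_rel htrans hM.2.2 i.val i.isLt j.val h
            have h2 : f (γM j) < f (γM i) := hf.2 _ _ hE
            omega
        have hv0 : γM ⟨0, by omega⟩ = v := hM.1
        have hwlast : γM ⟨m, by omega⟩ = w := hM.2.1
        refine ⟨?_, ?_, fun x y hx hy hxy => hchain x y (hsub hx) (hsub hy) hxy⟩
        · intro x hx hxv
          obtain ⟨i, rfl⟩ := hsub hx
          rcases Nat.eq_zero_or_pos i.val with h | h
          · exact absurd (by rw [← hv0]; congr 1; exact Fin.ext (by simp [h])) hxv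
          · have hE := path_rel htrans hM.2.2 i.val i.isLt 0 h
            rw [hv0] at hE
            exact hf.2 _ _ hE
        · intro x hx hxw
          obtain ⟨i, rfl⟩ := hsub hx
          rcases Nat.lt_or_ge i.val m with h | h
          · have hE := path_rel htrans hM.2.2 m (by omega) i.val h
            rw [hwlast] at hE
            exact hf.2 _ _ hE
          · have : i.val = m := by omega
            exact absurd (by rw [← hwlast]; congr 1; exact Fin.ext (by simp [this])) hxw
    refine ⟨head_sorted hL hvS key.1, last_sorted hL hwS key.2.1,
      chain'_sorted hL (fun x y hx hy hxy _ => key.2.2 x y hx hy hxy)⟩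
  · intro hSR v w hvw
    have hEvw : E v w := by
      rwa [@Relation.transGen_eq_self _ _ ⟨fun a b c hab hbc => htrans a b c hab hbc⟩] at hvw
    obtain ⟨f, hf⟩ := exists_topo E hacyc htrans
    set S : Set V := {x | ∃ (k : ℕ) (p : Fin (k+1) → V),
      IsDirPathFromTo E k p v w ∧ x ∈ Set.range p} with hSdef
    obtain ⟨L, hL⟩ := exists_sorted hf.1 S
    have hpath0 : IsDirPathFromTo E 1 (fun i : Fin 2 => if (i:ℕ) = 0 then v else w) v w := by
      refine ⟨rfl, rfl, ?_⟩
      intro i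
      have h0 : (i:ℕ) = 0 := by omega
      have h1 : (i.castSucc : ℕ) = 0 := by simpa using h0
      have h2 : (i.succ : ℕ) = 1 := by simpa using h0
      simp only [h1, h2]
      simpa using hEvw
    have hvS : v ∈ S := ⟨1, _, hpath0, ⟨0, rfl⟩⟩
    have hwS : w ∈ S := ⟨1, _, hpath0, ⟨1, rfl⟩⟩
    have hmin : ∀ x ∈ S, x ≠ v → f v < f x := by
      rintro x ⟨k, p, hp, i, rfl⟩ hxv
      rcases Nat.eq_zero_or_pos i.val with h | h
      · exact absurd (by rw [← hp.1]; congr 1; exact Fin.ext (by simp [h])) hxv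
      · have hE := path_rel htrans hp.2.2 i.val i.isLt 0 h
        rw [show p ⟨0, by omega⟩ = v from hp.1] at hE
        exact hf.2 _ _ hE
    have hmax : ∀ x ∈ S, x ≠ w → f x < f w := by
      rintro x ⟨k, p, hp, i, rfl⟩ hxw
      rcases Nat.lt_or_ge i.val k with h | h
      · have hE := path_rel htrans hp.2.2 k (by omega) i.val h
        rw [show p ⟨k, by omega⟩ = w from hp.2.1] at hE
        exact hf.2 _ _ hE
      · have : i.val = k := by omega
        exact absurd (by rw [← hp.2.1]; congr 1; exact Fin.ext (by simp [this])) hxw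
    have hch : L.Chain' E := by
      apply chain'_sorted hL
      rintro x y ⟨k1, p1, h1, hx1⟩ ⟨k2, p2, h2, hy2⟩ hxy hno
      obtain ⟨L12, hL12⟩ := exists_sorted hf.1 (Set.range p1 ∪ Set.range p2)
      have hdp := hSR f hf v w k1 k2 p1 p2 h1 h2 L12 hL12
      apply adj_of_no_between hL12.2 hdp.2.2 ((hL12.1 x).2 (Or.inl hx1))
        ((hL12.1 y).2 (Or.inr hy2)) hxy
      intro z hz
      refine hno z ?_
      rcases (hL12.1 z).1 hz with h | h
      · exact ⟨k1, p1, h1, h⟩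
      · exact ⟨k2, p2, h2, h⟩
    have hhead := head_sorted hL hvS hmin
    have hlast := last_sorted hL hwS hmax
    obtain ⟨a, t, rfl⟩ : ∃ a t, L = a :: t := by
      cases L with
      | nil => simp at hhead
      | cons a t => exact ⟨a, t, rfl⟩
    refine ⟨t.length, fun i => (a :: t).get ⟨i.val, i.isLt⟩, ⟨?_, ?_, ?_⟩, ?_⟩
    · have ha : a = v := by simpa using hhead
      simpa using ha
    · have : (a :: t).getLast (by simp) = w := by
        rw [List.getLast?_eq_getLast_of_ne_nil (by simp)] at hlast
        simpa using hlast
      rw [← this, List.getLast_eq_getElem]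
      simp [List.get_eq_getElem]
    · intro i
      have := List.isChain_iff_getElem.1 hch i.val (by simpa using i.isLt)
      exact this
    · rintro k p hp x ⟨i, rfl⟩
      have hxS : p i ∈ S := ⟨k, p, hp, ⟨i, rfl⟩⟩
      have hxL := (hL.1 (p i)).2 hxS
      obtain ⟨⟨j, hj⟩, hget⟩ := List.mem_iff_get.1 hxL
      exact ⟨⟨j, hj⟩, hget⟩
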